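/- Let G be a finite tree rooted at s, let i be a non-root vertex with parent p (the neighbor of i with dist(s, p) = dist(s, i) − 1), and let D denote the set of proper descendants of i (vertices u ≠ i whose unique path to s passes through i). Let C be a set of vertices with i ∈ C, p ∉ C, s ∉ C. Write B := C ∩ D and A := C \ (D ∪ {i}). Then the subgraph of G induced on C ∪ {p} is connected if and only if both the subgraph induced on B ∪ {i} is connected and the subgraph induced on A ∪ {p} is connected. -/

import Mathlib

open SimpleGraph

/-- If any edge of `G` leaving `L` within `S` must start at `i0`, then walks in the
induced graph on `S` between vertices of `L` can be rerouted within `S ∩ L`. -/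
private lemma induce_side_reachable {V : Type*} {G : SimpleGraph V} {S L : Set V} {i0 : V}
    (hi0S : i0 ∈ S) (hi0L : i0 ∈ L)
    (bridge : ∀ u v : V, u ∈ L → v ∉ L → G.Adj u v → u = i0) :
    ∀ (n : ℕ) {a b : ↥S} (w : (G.induce S).Walk a b), w.length ≤ n →
      ∀ (ha : ↑a ∈ L) (hb : ↑b ∈ L),
      (G.induce (S ∩ L)).Reachable ⟨↑a, ⟨a.2, ha⟩⟩ ⟨↑b, ⟨b.2, hb⟩⟩ := by
  classical
  have cross : ∀ {a b : ↥S} (w : (G.induce S).Walk a b), ↑a ∉ L → ↑b ∈ L →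
      (⟨i0, hi0S⟩ : ↥S) ∈ w.support := by
    intro a b w
    induction w with
    | nil => intro ha hb; exact absurd hb ha
    | @cons a c b h q ih =>
      intro ha hb
      by_cases hc : ↑c ∈ L
      · have hca : c = (⟨i0, hi0S⟩ : ↥S) := Subtype.ext (bridge ↑c ↑a hc ha h.symm)
        rw [SimpleGraph.Walk.support_cons]
        exact List.mem_cons_of_mem _ (hca ▸ q.start_mem_support)
      · rw [SimpleGraph.Walk.support_cons]
        exact List.mem_cons_of_mem _ (ih hc hb)
  intro n
  induction n with
  | zero =>
    intro a b w hw ha hb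
    cases w with
    | nil => exact SimpleGraph.Reachable.refl _
    | cons h q => simp at hw
  | succ n ih =>
    intro a b w hw ha hb
    cases w with
    | nil => exact SimpleGraph.Reachable.refl _
    | @cons _ c _ h q =>
      have hq : q.length ≤ n := by
        simp only [SimpleGraph.Walk.length_cons] at hw; omega
      by_cases hc : ↑c ∈ L
      · have step : (G.induce (S ∩ L)).Adj ⟨↑a, ⟨a.2, ha⟩⟩ ⟨↑c, ⟨c.2, hc⟩⟩ := h
        exact step.reachable.trans (ih q hq hc hb)
      · have ha' : (a : V) = i0 := bridge ↑a ↑c ha hc h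
        have hmem : (⟨i0, hi0S⟩ : ↥S) ∈ q.support := cross q hc hb
        have r := ih (q.dropUntil _ hmem) (le_trans (q.length_dropUntil_le hmem) hq) hi0L hb
        have heq : (⟨↑a, ⟨a.2, ha⟩⟩ : ↥(S ∩ L)) = ⟨i0, ⟨hi0S, hi0L⟩⟩ := Subtype.ext ha'
        rw [heq]; exact r

/-- Decomposition step of the correctness proof for the dynamic
program for Geographic Knapsack on trees: for a vertex `i` with parent `p`, and a
set `C` containing `i` but neither `p` nor the root `s`, the subgraph induced on
`C ∪ {p}` is connected iff the part of `C` inside `i`'s subtree is connected through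
`i` and the rest of `C` is connected through `p`. Here `D` is the set of proper
descendants of `i`: vertices `u ≠ i` whose (unique) path to `s` passes through `i`. -/
theorem tree_packing_decomposition
    {V : Type*} [Fintype V] (G : SimpleGraph V) (hG : G.IsTree)
    (s i p : V) (hi : i ≠ s)
    (hadj : G.Adj p i) (hpar : G.dist s i = G.dist s p + 1)
    (D : Set V)
    (hD : D = {u : V | u ≠ i ∧ ∀ w : G.Walk u s, w.IsPath → i ∈ w.support})
    (C : Set V) (hiC : i ∈ C) (hpC : p ∉ C) (hsC : s ∉ C)
    (B A : Set V) (hB : B = C ∩ D) (hA : A = C \ (D ∪ {i})) :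
    (G.induce (C ∪ {p})).Connected ↔
      (G.induce (B ∪ {i})).Connected ∧ (G.induce (A ∪ {p})).Connected := by
  classical
  have hGc : G.Connected := hG.isConnected
  -- a path from `p` to `s` avoiding `i`
  obtain ⟨w0, hw0⟩ := hGc.exists_walk_length_eq_dist p s
  set q : G.Walk p s := w0.bypass with hqdef
  have hqpath : q.IsPath := w0.bypass_isPath
  have hqi : i ∉ q.support := by
    intro hmem
    have h1 : G.dist i s ≤ (q.dropUntil i hmem).length := SimpleGraph.dist_le _
    have h2 : (q.dropUntil i hmem).length ≤ q.length := q.length_dropUntil_le hmem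
    have h3 : q.length ≤ w0.length := w0.length_bypass_le
    have h4 : G.dist i s = G.dist s i := SimpleGraph.dist_comm
    have h5 : G.dist p s = G.dist s p := SimpleGraph.dist_comm
    omega
  -- the unique path from `i` to `s` starts with the edge to `p`
  have hipq : (SimpleGraph.Walk.cons hadj.symm q).IsPath := hqpath.cons hqi
  -- every neighbor of `i` other than `p` is a proper descendant of `i`
  have hnbr : ∀ v : V, G.Adj i v → v ≠ p → v ∈ D := by
    intro v hv hvp
    rw [hD]
    refine ⟨hv.ne', ?_⟩
    intro w hw
    by_contra hiw
    have hcons : (SimpleGraph.Walk.cons hv w).IsPath := hw.cons hiw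
    have huniq := (hG.existsUnique_path i s).unique hcons hipq
    have hsupp := congrArg SimpleGraph.Walk.support huniq
    rw [SimpleGraph.Walk.support_cons, SimpleGraph.Walk.support_cons,
      w.support_eq_cons, q.support_eq_cons] at hsupp
    simp only [List.cons.injEq] at hsupp
    exact hvp hsupp.2.1
  have hpD : p ∉ D := by
    rw [hD]
    intro ⟨_, hall⟩
    exact hqi (hall q hqpath)
  have hpDi : p ∉ D ∪ {i} := by
    simp only [Set.mem_union, Set.mem_singleton_iff]
    rintro (h | h)
    · exact hpD h
    · exact hadj.ne h
  -- the bridge lemma: the only edge leaving `D ∪ {i}` is the edge `i p`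
  have bridge : ∀ u v : V, u ∈ D ∪ {i} → v ∉ D ∪ {i} → G.Adj u v → u = i ∧ v = p := by
    intro u v hu hv huv
    have hvi : v ≠ i := by intro h; exact hv (Or.inr h)
    rcases hu with hu | hu
    · -- u ∈ D : impossible
      exfalso
      rw [hD] at hu
      obtain ⟨hui, hall⟩ := hu
      have hvD : v ∉ D := fun h => hv (Or.inl h)
      rw [hD] at hvD
      simp only [Set.mem_setOf_eq, not_and, not_forall] at hvD
      obtain ⟨wv, hwvp, hwvi⟩ := hvD hvi
      by_cases hu2 : u ∈ wv.support
      · have := hall (wv.dropUntil u hu2) (hwvp.dropUntil hu2)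
        exact hwvi (wv.support_dropUntil_subset hu2 this)
      · have hcons : (SimpleGraph.Walk.cons huv wv).IsPath := hwvp.cons hu2
        have := hall _ hcons
        rw [SimpleGraph.Walk.support_cons] at this
        rcases List.mem_cons.mp this with h | h
        · exact hui h.symm
        · exact hwvi h
    · -- u = i
      rw [Set.mem_singleton_iff] at hu
      subst hu
      refine ⟨rfl, ?_⟩
      by_contra hvp
      exact hv (Or.inl (hnbr v huv hvp))
  have hiDi : i ∈ D ∪ {i} := Or.inr rfl
  have hiCp : i ∈ C ∪ {p} := Or.inl hiC
  have hpCp : p ∈ C ∪ {p} := Or.inr rfl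
  -- set identities
  have hS1 : (C ∪ {p}) ∩ (D ∪ {i}) = B ∪ {i} := by
    subst hB
    ext x
    simp only [Set.mem_inter_iff, Set.mem_union, Set.mem_singleton_iff]
    constructor
    · rintro ⟨hx1, hx2⟩
      rcases hx2 with hx2 | hx2
      · rcases hx1 with hx1 | hx1
        · exact Or.inl ⟨hx1, hx2⟩
        · exact absurd (Or.inl (hx1 ▸ hx2)) hpDi
      · exact Or.inr hx2
    · rintro (⟨h1, h2⟩ | h)
      · exact ⟨Or.inl h1, Or.inl h2⟩
      · exact ⟨Or.inl (h ▸ hiC), Or.inr h⟩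
  have hS2 : (C ∪ {p}) ∩ (D ∪ {i})ᶜ = A ∪ {p} := by
    subst hA
    ext x
    simp only [Set.mem_inter_iff, Set.mem_union, Set.mem_compl_iff, Set.mem_diff,
      Set.mem_singleton_iff]
    constructor
    · rintro ⟨hx1, hx2⟩
      rcases hx1 with hx1 | hx1
      · exact Or.inl ⟨hx1, hx2⟩
      · exact Or.inr hx1
    · rintro (⟨h1, h2⟩ | h)
      · exact ⟨Or.inl h1, h2⟩
      · exact ⟨Or.inr h, h ▸ hpDi⟩
  constructor
  · intro hconn
    constructor
    · -- B ∪ {i}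
      rw [← hS1]
      rw [SimpleGraph.connected_iff]
      refine ⟨?_, ⟨⟨i, hiCp, hiDi⟩⟩⟩
      rintro ⟨x, hx1, hx2⟩ ⟨y, hy1, hy2⟩
      obtain ⟨w⟩ := hconn ⟨x, hx1⟩ ⟨y, hy1⟩
      exact induce_side_reachable hiCp hiDi
        (fun u v hu hv huv => (bridge u v hu hv huv).1) w.length w le_rfl hx2 hy2
    · -- A ∪ {p}
      rw [← hS2]
      rw [SimpleGraph.connected_iff]
      refine ⟨?_, ⟨⟨p, hpCp, hpDi⟩⟩⟩
      rintro ⟨x, hx1, hx2⟩ ⟨y, hy1, hy2⟩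
      obtain ⟨w⟩ := hconn ⟨x, hx1⟩ ⟨y, hy1⟩
      refine induce_side_reachable hpCp hpDi
        (fun u v hu hv huv => ?_) w.length w le_rfl hx2 hy2
      simp only [Set.mem_compl_iff, not_not] at hu hv
      exact (bridge v u hv hu huv.symm).2
  · rintro ⟨h1, h2⟩
    have hip2 : (G.induce ({i, p} : Set V)).Connected :=
      SimpleGraph.induce_pair_connected_of_adj hadj.symm
    have h3 : (G.induce ((B ∪ {i}) ∪ {i, p})).Connected :=
      SimpleGraph.induce_union_connected h1.preconnected hip2.preconnected ⟨i, Or.inr rfl, Or.inl rfl⟩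
    have h4 : (G.induce (((B ∪ {i}) ∪ {i, p}) ∪ (A ∪ {p}))).Connected :=
      SimpleGraph.induce_union_connected h3.preconnected h2.preconnected
        ⟨p, Or.inr (Or.inr rfl), Or.inr rfl⟩
    have hset : ((B ∪ {i}) ∪ {i, p}) ∪ (A ∪ {p}) = C ∪ {p} := by
      subst hB hA
      ext x
      simp only [Set.mem_union, Set.mem_insert_iff, Set.mem_singleton_iff,
        Set.mem_inter_iff, Set.mem_diff]
      constructor
      · rintro (((⟨h, _⟩ | h) | (h | h)) | (⟨h, _⟩ | h))
        · exact Or.inl h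
        · exact Or.inl (h ▸ hiC)
        · exact Or.inl (h ▸ hiC)
        · exact Or.inr h
        · exact Or.inl h
        · exact Or.inr h
      · rintro (h | h)
        · by_cases hxi : x = i
          · exact Or.inl (Or.inl (Or.inr hxi))
          · by_cases hxD : x ∈ D
            · exact Or.inl (Or.inl (Or.inl ⟨h, hxD⟩))
            · refine Or.inr (Or.inl ⟨h, ?_⟩)
              rintro (hh | hh)
              · exact hxD hh
              · exact hxi hh
        · exact Or.inr (Or.inr h)
    rw [hset] at h4
    exact h4
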